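/- arXiv:1209.1038 — 2 statements merged into one kernel-verified Lean document; each statement's English description precedes it below -/
import Mathlib

section
/- Let (X, ν) be a measure space, T > 0, 1 < p < 2, μ > 0, and let δ₁, δ₂ ≥ 0 and δ := ((2−p)/2)δ₁ + δ₂. Let g, F : (0,T) × X → ℝ^d be measurable and suppose there are constants K₁, K₂ ≥ 0 such that t^{δ₁} (∫_X (μ+|F(t,x)|²)^(p/2) dν(x))^(1/p) ≤ K₁ for almost every t ∈ (0,T), and ∫₀^T t^{2δ₂} ∫_X (μ+|F(t,x)|²)^((p−2)/2) |g(t,x)|² dν(x) dt ≤ K₂. Then ∫₀^T t^{2δ} (∫_X |g(t,x)|^p dν(x))^(2/p) dt ≤ K₁^(2−p) K₂. -/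
open MeasureTheory

open ENNReal

lemma aux_meas_rpow {α : Type*} [MeasurableSpace α] {f : α → ℝ} (hf : Measurable f)
    (hpos : ∀ x, 0 < f x) (c : ℝ) : Measurable (fun x => f x ^ c) := by
  have h : (fun x => f x ^ c) = fun x => Real.exp (Real.log (f x) * c) := by
    funext x; rw [Real.rpow_def_of_pos (hpos x)]
  rw [h]
  exact Real.measurable_exp.comp ((Real.measurable_log.comp hf).mul measurable_const)

/-- Lemma A.1 of the paper. -/
theorem stmt_6 {X : Type*} [MeasurableSpace X] (ν : Measure X)
    (T p μ δ₁ δ₂ δ K₁ K₂ : ℝ) (hT : 0 < T) (hp1 : 1 < p) (hp2 : p < 2) (hμ : 0 < μ)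
    (hδ₁ : 0 ≤ δ₁) (hδ₂ : 0 ≤ δ₂) (hδ : δ = (2 - p) / 2 * δ₁ + δ₂)
    (hK₁ : 0 ≤ K₁) (hK₂ : 0 ≤ K₂)
    (d : ℕ) (g F : ℝ → X → EuclideanSpace ℝ (Fin d))
    (hg : Measurable (Function.uncurry g)) (hF : Measurable (Function.uncurry F))
    (h1 : ∀ᵐ t ∂(volume.restrict (Set.Ioo (0 : ℝ) T)),
      ENNReal.ofReal (t ^ δ₁) *
          (∫⁻ x, ENNReal.ofReal ((μ + ‖F t x‖ ^ 2) ^ (p / 2)) ∂ν) ^ (1 / p)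
        ≤ ENNReal.ofReal K₁)
    (h2 : ∫⁻ t in Set.Ioo (0 : ℝ) T, (ENNReal.ofReal (t ^ (2 * δ₂)) *
          ∫⁻ x, ENNReal.ofReal ((μ + ‖F t x‖ ^ 2) ^ ((p - 2) / 2) * ‖g t x‖ ^ 2) ∂ν)
        ≤ ENNReal.ofReal K₂) :
    ∫⁻ t in Set.Ioo (0 : ℝ) T, (ENNReal.ofReal (t ^ (2 * δ)) *
          (∫⁻ x, ENNReal.ofReal (‖g t x‖ ^ p) ∂ν) ^ (2 / p))
      ≤ ENNReal.ofReal (K₁ ^ (2 - p) * K₂) := by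
  have hp0 : 0 < p := by linarith
  have h2p : (0:ℝ) < 2 - p := by linarith
  set A : ℝ → ℝ≥0∞ := fun t => ∫⁻ x, ENNReal.ofReal ((μ + ‖F t x‖ ^ 2) ^ ((p - 2) / 2) * ‖g t x‖ ^ 2) ∂ν with hA
  set B : ℝ → ℝ≥0∞ := fun t => ∫⁻ x, ENNReal.ofReal ((μ + ‖F t x‖ ^ 2) ^ (p / 2)) ∂ν with hB
  set G : ℝ → ℝ≥0∞ := fun t => ∫⁻ x, ENNReal.ofReal (‖g t x‖ ^ p) ∂ν with hG
  have hgslice : ∀ t, Measurable (g t) := fun t =>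
    hg.comp (measurable_const.prodMk measurable_id)
  have hFslice : ∀ t, Measurable (F t) := fun t =>
    hF.comp (measurable_const.prodMk measurable_id)
  -- Step 1: Hölder in x
  have holder : ∀ t, G t ≤ (A t) ^ (p / 2) * (B t) ^ ((2 - p) / 2) := by
    intro t
    have hbase : Measurable fun x => μ + ‖F t x‖ ^ 2 :=
      measurable_const.add ((hFslice t).norm.pow measurable_const)
    have hbasepos : ∀ x, (0:ℝ) < μ + ‖F t x‖ ^ 2 := fun x => by positivity
    have hmeasa : Measurable fun x =>
        ENNReal.ofReal ((μ + ‖F t x‖ ^ 2) ^ ((p - 2) / 2) * ‖g t x‖ ^ 2) :=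
      ENNReal.measurable_ofReal.comp ((aux_meas_rpow hbase hbasepos _).mul
        ((hgslice t).norm.pow measurable_const))
    have hmeasb : Measurable fun x =>
        ENNReal.ofReal ((μ + ‖F t x‖ ^ 2) ^ (p / 2)) :=
      ENNReal.measurable_ofReal.comp (aux_meas_rpow hbase hbasepos _)
    have hconj : (2 / p).HolderConjugate (2 / (2 - p)) := by
      rw [Real.holderConjugate_iff]; constructor
      · rw [lt_div_iff₀ hp0]; linarith
      · rw [inv_div, inv_div]; ring
    have key := ENNReal.lintegral_mul_le_Lp_mul_Lq ν hconj
      (f := fun x => (ENNReal.ofReal ((μ + ‖F t x‖ ^ 2) ^ ((p - 2) / 2) * ‖g t x‖ ^ 2)) ^ (p / 2))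
      (g := fun x => (ENNReal.ofReal ((μ + ‖F t x‖ ^ 2) ^ (p / 2))) ^ ((2 - p) / 2))
      ((hmeasa.pow_const _).aemeasurable) ((hmeasb.pow_const _).aemeasurable)
    have heq : ∀ x, ENNReal.ofReal (‖g t x‖ ^ p) =
        (ENNReal.ofReal ((μ + ‖F t x‖ ^ 2) ^ ((p - 2) / 2) * ‖g t x‖ ^ 2)) ^ (p / 2) *
        (ENNReal.ofReal ((μ + ‖F t x‖ ^ 2) ^ (p / 2))) ^ ((2 - p) / 2) := by
      intro x
      have hpos : (0:ℝ) < μ + ‖F t x‖ ^ 2 := hbasepos x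
      rw [ENNReal.ofReal_rpow_of_nonneg (by positivity) (by positivity),
          ENNReal.ofReal_rpow_of_nonneg (Real.rpow_nonneg hpos.le _) (by positivity),
          ← ENNReal.ofReal_mul (by positivity)]
      congr 1
      rw [Real.mul_rpow (Real.rpow_nonneg hpos.le _) (by positivity),
          ← Real.rpow_natCast (‖g t x‖) 2, ← Real.rpow_mul (norm_nonneg _),
          ← Real.rpow_mul hpos.le, ← Real.rpow_mul hpos.le]
      rw [show ((2:ℕ):ℝ) * (p/2) = p by push_cast; ring]
      rw [mul_right_comm, ← Real.rpow_add hpos,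
          show (p-2)/2*(p/2) + p/2*((2-p)/2) = 0 by ring, Real.rpow_zero, one_mul]
    have hsimp1 : ∀ x, ((ENNReal.ofReal ((μ + ‖F t x‖ ^ 2) ^ ((p - 2) / 2) * ‖g t x‖ ^ 2)) ^ (p/2)) ^ (2/p)
        = ENNReal.ofReal ((μ + ‖F t x‖ ^ 2) ^ ((p - 2) / 2) * ‖g t x‖ ^ 2) := by
      intro x
      rw [← ENNReal.rpow_mul, show (p/2)*(2/p) = 1 by field_simp, ENNReal.rpow_one]
    have hsimp2 : ∀ x, ((ENNReal.ofReal ((μ + ‖F t x‖ ^ 2) ^ (p / 2))) ^ ((2-p)/2)) ^ (2/(2-p))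
        = ENNReal.ofReal ((μ + ‖F t x‖ ^ 2) ^ (p / 2)) := by
      intro x
      rw [← ENNReal.rpow_mul, show ((2-p)/2)*(2/(2-p)) = 1 by field_simp, ENNReal.rpow_one]
    calc G t = ∫⁻ x, ((fun x => (ENNReal.ofReal ((μ + ‖F t x‖ ^ 2) ^ ((p - 2) / 2) * ‖g t x‖ ^ 2)) ^ (p/2)) *
                  (fun x => (ENNReal.ofReal ((μ + ‖F t x‖ ^ 2) ^ (p / 2))) ^ ((2-p)/2))) x ∂ν := by
            simp only [Pi.mul_apply]; exact lintegral_congr fun x => heq x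
      _ ≤ _ := key
      _ = (A t) ^ (p/2) * (B t) ^ ((2-p)/2) := by
            rw [lintegral_congr hsimp1, lintegral_congr hsimp2, one_div_div, one_div_div]
  -- Step 2: pointwise a.e. bound in t
  have hae : ∀ᵐ t ∂(volume.restrict (Set.Ioo (0 : ℝ) T)),
      ENNReal.ofReal (t ^ (2 * δ)) * (G t) ^ (2 / p)
        ≤ ENNReal.ofReal (K₁ ^ (2 - p)) * (ENNReal.ofReal (t ^ (2 * δ₂)) * A t) := by
    filter_upwards [h1, ae_restrict_mem measurableSet_Ioo] with t h1t ht
    have htpos : 0 < t := ht.1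
    have step1 : ENNReal.ofReal (t ^ ((2-p) * δ₁)) * (B t) ^ ((2-p)/p)
        ≤ ENNReal.ofReal (K₁ ^ (2-p)) := by
      have := ENNReal.rpow_le_rpow h1t h2p.le
      rwa [ENNReal.mul_rpow_of_nonneg _ _ h2p.le, ← ENNReal.rpow_mul,
          ENNReal.ofReal_rpow_of_nonneg (Real.rpow_nonneg htpos.le _) h2p.le,
          ← Real.rpow_mul htpos.le, mul_comm δ₁, show 1/p*(2-p) = (2-p)/p by ring,
          ENNReal.ofReal_rpow_of_nonneg hK₁ h2p.le] at this
    have step2 : (G t) ^ (2/p) ≤ A t * (B t) ^ ((2-p)/p) := by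
      have := ENNReal.rpow_le_rpow (holder t) (by positivity : (0:ℝ) ≤ 2/p)
      rwa [ENNReal.mul_rpow_of_nonneg _ _ (by positivity), ← ENNReal.rpow_mul,
        ← ENNReal.rpow_mul, show p/2*(2/p) = 1 by field_simp, ENNReal.rpow_one,
        show (2-p)/2*(2/p) = (2-p)/p by field_simp] at this
    have hsplit : ENNReal.ofReal (t ^ (2*δ)) =
        ENNReal.ofReal (t ^ ((2-p)*δ₁)) * ENNReal.ofReal (t ^ (2*δ₂)) := by
      rw [← ENNReal.ofReal_mul (Real.rpow_nonneg htpos.le _), ← Real.rpow_add htpos,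
        show (2-p)*δ₁ + 2*δ₂ = 2*δ by rw [hδ]; ring]
    calc ENNReal.ofReal (t ^ (2*δ)) * (G t) ^ (2/p)
        ≤ ENNReal.ofReal (t ^ ((2-p)*δ₁)) * ENNReal.ofReal (t ^ (2*δ₂)) *
            (A t * (B t) ^ ((2-p)/p)) := by
          rw [hsplit]; exact mul_le_mul_right step2 _
      _ = (ENNReal.ofReal (t ^ ((2-p)*δ₁)) * (B t) ^ ((2-p)/p)) *
            (ENNReal.ofReal (t ^ (2*δ₂)) * A t) := by ring
      _ ≤ ENNReal.ofReal (K₁ ^ (2-p)) * (ENNReal.ofReal (t ^ (2*δ₂)) * A t) :=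
          mul_le_mul_left step1 _
  calc ∫⁻ t in Set.Ioo (0:ℝ) T, ENNReal.ofReal (t ^ (2*δ)) * (G t) ^ (2/p)
      ≤ ∫⁻ t in Set.Ioo (0:ℝ) T,
          ENNReal.ofReal (K₁ ^ (2-p)) * (ENNReal.ofReal (t ^ (2*δ₂)) * A t) :=
        lintegral_mono_ae hae
    _ = ENNReal.ofReal (K₁ ^ (2-p)) *
          ∫⁻ t in Set.Ioo (0:ℝ) T, ENNReal.ofReal (t ^ (2*δ₂)) * A t :=
        lintegral_const_mul' _ _ ENNReal.ofReal_ne_top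
    _ ≤ ENNReal.ofReal (K₁ ^ (2-p)) * ENNReal.ofReal K₂ :=
        mul_le_mul_right h2 _
    _ = ENNReal.ofReal (K₁ ^ (2-p) * K₂) :=
        (ENNReal.ofReal_mul (Real.rpow_nonneg hK₁ _)).symm
end

section
/- Let (X, ν) be a measure space, 1 < p < 2, μ > 0, and M ≥ 0. Let w_m, w : X → ℝ^d be measurable with w_m → w ν-almost everywhere as m → ∞, let ψ : X → ℝ^d satisfy ∫_X |ψ|² dν < ∞, and let g_m : X → ℝ^d be measurable with ∫_X |g_m|² dν ≤ M² for all m. Then ∫_X ((μ+|w_m|²)^((p−2)/2) − (μ+|w|²)^((p−2)/2)) ⟨g_m, ψ⟩ dν → 0 as m → ∞. -/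
open MeasureTheory Filter
open scoped RealInnerProductSpace

/-- Measure-theoretic core of Lemma 2.4. -/
theorem stmt_10 {X : Type*} [MeasurableSpace X] (ν : Measure X)
    (p μ M : ℝ) (hp1 : 1 < p) (hp2 : p < 2) (hμ : 0 < μ) (hM : 0 ≤ M)
    (d : ℕ) (w : X → EuclideanSpace ℝ (Fin d)) (wseq : ℕ → X → EuclideanSpace ℝ (Fin d))
    (ψ : X → EuclideanSpace ℝ (Fin d)) (gseq : ℕ → X → EuclideanSpace ℝ (Fin d))
    (hwm : ∀ m, Measurable (wseq m)) (hw : Measurable w)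
    (hconv : ∀ᵐ x ∂ν, Tendsto (fun m => wseq m x) atTop (nhds (w x)))
    (hψm : Measurable ψ) (hψ : ∫⁻ x, ENNReal.ofReal (‖ψ x‖ ^ 2) ∂ν ≠ ⊤)
    (hgm : ∀ m, Measurable (gseq m))
    (hg : ∀ m, ∫⁻ x, ENNReal.ofReal (‖gseq m x‖ ^ 2) ∂ν ≤ ENNReal.ofReal (M ^ 2)) :
    Tendsto (fun m =>
        ∫ x, ((μ + ‖wseq m x‖ ^ 2) ^ ((p - 2) / 2) - (μ + ‖w x‖ ^ 2) ^ ((p - 2) / 2)) *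
          ⟪gseq m x, ψ x⟫ ∂ν)
      atTop (nhds 0) := by
  set e : ℝ := (p - 2) / 2 with he_def
  have he : e ≤ 0 := by
    rw [he_def]
    nlinarith
  set C : ℝ := μ ^ e with hC_def
  have hC : 0 < C := Real.rpow_pos_of_pos hμ e
  -- pointwise bounds on the coefficient
  have hub : ∀ v : EuclideanSpace ℝ (Fin d), (μ + ‖v‖ ^ 2) ^ e ≤ C :=
    fun v => Real.rpow_le_rpow_of_nonpos hμ (le_add_of_nonneg_right (sq_nonneg _)) he
  have hpos : ∀ v : EuclideanSpace ℝ (Fin d), 0 < (μ + ‖v‖ ^ 2) ^ e :=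
    fun v => Real.rpow_pos_of_pos (by positivity) e
  set a : (X → EuclideanSpace ℝ (Fin d)) → X → ℝ :=
    fun u x => (μ + ‖u x‖ ^ 2) ^ e with ha_def
  have habs : ∀ m x, |a (wseq m) x - a w x| ≤ C := by
    intro m x
    rw [abs_sub_le_iff]
    constructor
    · linarith [hub (wseq m x), hpos (w x)]
    · linarith [hub (w x), hpos (wseq m x)]
  have hameas : ∀ (u : X → EuclideanSpace ℝ (Fin d)), Measurable u → Measurable (a u) := by
    intro u hu
    exact (measurable_const.add ((hu.norm).pow measurable_const)).pow measurable_const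
  -- the L² quantity
  set B : ℕ → ENNReal :=
    fun m => ∫⁻ x, ENNReal.ofReal ((|a (wseq m) x - a w x| * ‖ψ x‖) ^ 2) ∂ν with hB_def
  set bound : X → ENNReal := fun x => ENNReal.ofReal (C ^ 2 * ‖ψ x‖ ^ 2) with hbound_def
  have hbound_int : ∫⁻ x, bound x ∂ν ≠ ⊤ := by
    have : ∀ x, bound x = ENNReal.ofReal (C ^ 2) * ENNReal.ofReal (‖ψ x‖ ^ 2) := by
      intro x
      rw [← ENNReal.ofReal_mul (by positivity : (0:ℝ) ≤ C ^ 2)]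
    simp_rw [this]
    rw [lintegral_const_mul' _ _ ENNReal.ofReal_ne_top]
    exact ENNReal.mul_ne_top ENNReal.ofReal_ne_top hψ
  have hBbound : ∀ m, B m ≤ ∫⁻ x, bound x ∂ν := by
    intro m
    refine lintegral_mono fun x => ENNReal.ofReal_le_ofReal ?_
    rw [mul_pow]
    exact mul_le_mul_of_nonneg_right
      (pow_le_pow_left₀ (abs_nonneg _) (habs m x) 2) (by positivity)
  have hBne : ∀ m, B m ≠ ⊤ := fun m => ne_top_of_le_ne_top hbound_int (hBbound m)
  -- B m → 0 by dominated convergence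
  have hB0 : Tendsto B atTop (nhds 0) := by
    have := tendsto_lintegral_of_dominated_convergence (μ := ν)
      (F := fun m x => ENNReal.ofReal ((|a (wseq m) x - a w x| * ‖ψ x‖) ^ 2))
      (f := fun _ => 0) (bound := bound)
      (fun m => (ENNReal.measurable_ofReal.comp
        ((((hameas _ (hwm m)).sub (hameas _ hw)).abs.mul hψm.norm).pow measurable_const)))
      (fun m => Eventually.of_forall fun x => by
        refine ENNReal.ofReal_le_ofReal ?_
        rw [mul_pow]
        exact mul_le_mul_of_nonneg_right
          (pow_le_pow_left₀ (abs_nonneg _) (habs m x) 2) (by positivity))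
      hbound_int
      ?_
    · simpa using this
    · filter_upwards [hconv] with x hx
      have h1 : Tendsto (fun m => a (wseq m) x) atTop (nhds (a w x)) := by
        have hc : ContinuousAt (fun t : ℝ => t ^ e) (μ + ‖w x‖ ^ 2) :=
          Real.continuousAt_rpow_const _ _ (Or.inl (by positivity))
        exact hc.tendsto.comp
          ((tendsto_const_nhds.add (((continuous_norm.tendsto _).comp hx).pow 2)))
      have h2 : Tendsto (fun m => (|a (wseq m) x - a w x| * ‖ψ x‖) ^ 2) atTop (nhds 0) := by
        have : Tendsto (fun m => |a (wseq m) x - a w x|) atTop (nhds 0) := by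
          have h3 : Tendsto (fun m => a (wseq m) x - a w x) atTop (nhds (a w x - a w x)) :=
            h1.sub tendsto_const_nhds
          have := h3.abs
          simpa using this
        have := (this.mul_const ‖ψ x‖).pow 2
        simpa using this
      simpa using ENNReal.tendsto_ofReal h2
  -- Hölder for each m
  have hsq : ∀ r : ℝ, 0 ≤ r → (ENNReal.ofReal r) ^ (2 : ℝ) = ENNReal.ofReal (r ^ 2) := by
    intro r hr
    rw [ENNReal.ofReal_rpow_of_nonneg hr (by norm_num), ← Real.rpow_natCast r 2]
    norm_num
  have hholder : ∀ m,
      (∫⁻ x, ENNReal.ofReal (|a (wseq m) x - a w x| * ‖ψ x‖ * ‖gseq m x‖) ∂ν)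
        ≤ (B m) ^ (1/2 : ℝ) * (ENNReal.ofReal (M ^ 2)) ^ (1/2 : ℝ) := by
    intro m
    have hconj : Real.HolderConjugate 2 2 := Real.HolderConjugate.two_two
    have hf : AEMeasurable (fun x => ENNReal.ofReal (|a (wseq m) x - a w x| * ‖ψ x‖)) ν :=
      (ENNReal.measurable_ofReal.comp
        (((hameas _ (hwm m)).sub (hameas _ hw)).abs.mul hψm.norm)).aemeasurable
    have hgf : AEMeasurable (fun x => ENNReal.ofReal ‖gseq m x‖) ν :=
      (ENNReal.measurable_ofReal.comp (hgm m).norm).aemeasurable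
    calc (∫⁻ x, ENNReal.ofReal (|a (wseq m) x - a w x| * ‖ψ x‖ * ‖gseq m x‖) ∂ν)
        = ∫⁻ x, (ENNReal.ofReal (|a (wseq m) x - a w x| * ‖ψ x‖)
            * ENNReal.ofReal ‖gseq m x‖) ∂ν := by
          congr 1
          funext x
          rw [ENNReal.ofReal_mul (by positivity)]
      _ ≤ (∫⁻ x, (ENNReal.ofReal (|a (wseq m) x - a w x| * ‖ψ x‖)) ^ (2:ℝ) ∂ν) ^ (1/2 : ℝ)
            * (∫⁻ x, (ENNReal.ofReal ‖gseq m x‖) ^ (2:ℝ) ∂ν) ^ (1/2 : ℝ) :=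
          ENNReal.lintegral_mul_le_Lp_mul_Lq ν hconj hf hgf
      _ ≤ (B m) ^ (1/2 : ℝ) * (ENNReal.ofReal (M ^ 2)) ^ (1/2 : ℝ) := by
          have e1 : (∫⁻ x, (ENNReal.ofReal (|a (wseq m) x - a w x| * ‖ψ x‖)) ^ (2:ℝ) ∂ν)
              = B m :=
            lintegral_congr fun x => hsq (|a (wseq m) x - a w x| * ‖ψ x‖)
              (mul_nonneg (abs_nonneg _) (norm_nonneg _))
          have e2 : (∫⁻ x, (ENNReal.ofReal ‖gseq m x‖) ^ (2:ℝ) ∂ν)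
              ≤ ENNReal.ofReal (M ^ 2) := by
            rw [lintegral_congr fun x => hsq ‖gseq m x‖ (norm_nonneg _)]
            exact hg m
          rw [e1]
          gcongr
  -- dominating real sequence
  set u : ℕ → ℝ := fun m => ((B m) ^ (1/2 : ℝ) * (ENNReal.ofReal (M ^ 2)) ^ (1/2 : ℝ)).toReal
    with hu_def
  have hune : ∀ m, (B m) ^ (1/2 : ℝ) * (ENNReal.ofReal (M ^ 2)) ^ (1/2 : ℝ) ≠ ⊤ := by
    intro m
    exact ENNReal.mul_ne_top (ENNReal.rpow_ne_top_of_nonneg (by norm_num) (hBne m))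
      (ENNReal.rpow_ne_top_of_nonneg (by norm_num) ENNReal.ofReal_ne_top)
  have hu0 : Tendsto u atTop (nhds 0) := by
    have h1 : Tendsto (fun m => (B m) ^ (1/2 : ℝ)) atTop (nhds 0) := by
      have : Tendsto (fun m => (B m) ^ (1/2 : ℝ)) atTop (nhds ((0 : ENNReal) ^ (1/2 : ℝ))) :=
        (ENNReal.continuous_rpow_const.tendsto _).comp hB0
      simpa [ENNReal.zero_rpow_of_pos] using this
    have h2 : Tendsto (fun m => (B m) ^ (1/2 : ℝ) * (ENNReal.ofReal (M ^ 2)) ^ (1/2 : ℝ))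
        atTop (nhds 0) := by
      have := ENNReal.Tendsto.mul_const h1
        (Or.inr (ENNReal.rpow_ne_top_of_nonneg (by norm_num : (0:ℝ) ≤ 1/2)
          (@ENNReal.ofReal_ne_top (M ^ 2))))
      simpa using this
    have := (ENNReal.tendsto_toReal (by simp : (0 : ENNReal) ≠ ⊤)).comp h2
    simpa only [hu_def, Function.comp_def, ENNReal.toReal_zero] using this
  -- squeeze
  refine squeeze_zero_norm (fun m => ?_) hu0
  calc ‖∫ x, (a (wseq m) x - a w x) * ⟪gseq m x, ψ x⟫ ∂ν‖
      ≤ (∫⁻ x, ENNReal.ofReal ‖(a (wseq m) x - a w x) * ⟪gseq m x, ψ x⟫‖ ∂ν).toReal :=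
        norm_integral_le_lintegral_norm _
    _ ≤ u m := by
        rw [hu_def]
        refine ENNReal.toReal_mono (hune m) ?_
        refine le_trans (lintegral_mono fun x => ENNReal.ofReal_le_ofReal ?_) (hholder m)
        rw [norm_mul]
        calc ‖a (wseq m) x - a w x‖ * ‖⟪gseq m x, ψ x⟫‖
            ≤ |a (wseq m) x - a w x| * (‖gseq m x‖ * ‖ψ x‖) := by
              rw [Real.norm_eq_abs, Real.norm_eq_abs]
              exact mul_le_mul_of_nonneg_left (abs_real_inner_le_norm _ _) (abs_nonneg _)
          _ = |a (wseq m) x - a w x| * ‖ψ x‖ * ‖gseq m x‖ := by ring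
end
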